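/- If every proper subset S of the state set Q of an n-state synchronizing strongly connected automaton A is kn-Extendable, then A has a synchronizing word of length at most (n-2)·kn + 1. -/

import Mathlib

/-- Action of a word on a state of a DFA. -/
def act {Q A : Type*} (δ : Q → A → Q) (q : Q) (w : List A) : Q := w.foldl δ q

/-- Preimage `S·w⁻¹ = {q : q·w ∈ S}` of a subset under a word. -/
def preim {Q A : Type*} [Fintype Q] [DecidableEq Q] (δ : Q → A → Q)
    (S : Finset Q) (w : List A) : Finset Q :=
  Finset.univ.filter fun q => act δ q w ∈ S

lemma act_append {Q A : Type*} (δ : Q → A → Q) (q : Q) (u v : List A) :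
    act δ q (u ++ v) = act δ (act δ q u) v := List.foldl_append

lemma mem_preim {Q A : Type*} [Fintype Q] [DecidableEq Q] (δ : Q → A → Q)
    (S : Finset Q) (w : List A) (q : Q) : q ∈ preim δ S w ↔ act δ q w ∈ S := by
  simp [preim]

lemma act_injective {Q A : Type*} (δ : Q → A → Q)
    (hinj : ∀ a : A, Function.Injective (fun q => δ q a)) (w : List A) :
    Function.Injective (fun q => act δ q w) := by
  induction w with
  | nil => intro a b h; exact h
  | cons a w ih =>
    intro x y h
    simp only [act, List.foldl_cons] at h
    exact hinj a (ih h)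

lemma extend_claim {Q A : Type*} [Fintype Q] [DecidableEq Q] (δ : Q → A → Q)
    (n k : ℕ) (hn : Fintype.card Q = n)
    (hext : ∀ S : Finset Q, S.Nonempty → S ≠ Finset.univ →
      ∃ v : List A, v.length ≤ k * n ∧ S.card < (preim δ S v).card) :
    ∀ m (S : Finset Q), S.Nonempty → n ≤ S.card + m →
      ∃ w : List A, w.length ≤ m * (k * n) ∧ ∀ q, act δ q w ∈ S := by
  intro m
  induction m with
  | zero =>
    intro S hS hcard
    have hcle : S.card ≤ n := hn ▸ Finset.card_le_univ S
    have : S = Finset.univ := Finset.eq_univ_of_card S (by rw [hn]; omega)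
    exact ⟨[], by simp, fun q => by simp [this, act]⟩
  | succ m ih =>
    intro S hS hcard
    by_cases hu : S = Finset.univ
    · exact ⟨[], by simp, fun q => by simp [hu, act]⟩
    · obtain ⟨v, hv, hlt⟩ := hext S hS hu
      have hne : (preim δ S v).Nonempty :=
        Finset.card_pos.mp (lt_of_le_of_lt (Nat.zero_le _) hlt)
      obtain ⟨w, hw, hws⟩ := ih (preim δ S v) hne (by omega)
      refine ⟨w ++ v, ?_, fun q => ?_⟩
      · rw [List.length_append, Nat.succ_mul]; omega
      · rw [act_append]
        exact (mem_preim δ S v _).mp (hws q)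

theorem stmt10 {Q A : Type*} [Fintype Q] [DecidableEq Q] (δ : Q → A → Q)
    (n k : ℕ) (hn : Fintype.card Q = n)
    (hsync : ∃ (w : List A) (p : Q), ∀ q : Q, act δ q w = p)
    (hsc : ∀ p q : Q, ∃ u : List A, act δ p u = q)
    (hext : ∀ S : Finset Q, S.Nonempty → S ≠ Finset.univ →
      ∃ v : List A, v.length ≤ k * n ∧ S.card < (preim δ S v).card) :
    ∃ (w : List A) (p : Q), (∀ q : Q, act δ q w = p) ∧
      w.length ≤ (n - 2) * (k * n) + 1 := by
  obtain ⟨w0, p, hp⟩ := hsync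
  by_cases h1 : n ≤ 1
  · have : Fintype.card Q ≤ 1 := by omega
    have hsub := Fintype.card_le_one_iff.mp this
    exact ⟨[], p, fun q => hsub q p, by simp⟩
  · push_neg at h1
    -- find a non-injective letter
    have hni : ∃ (a : A) (q1 q2 : Q), q1 ≠ q2 ∧ δ q1 a = δ q2 a := by
      by_contra h
      push_neg at h
      have hinj : ∀ a : A, Function.Injective (fun q => δ q a) := by
        intro a x y hxy
        by_contra hne
        exact h a x y hne hxy
      obtain ⟨x, y, hxy⟩ := Fintype.exists_pair_of_one_lt_card (by omega : 1 < Fintype.card Q)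
      exact hxy (act_injective δ hinj w0 (by simp only [hp x, hp y]))
    obtain ⟨a, q1, q2, hq12, hδ⟩ := hni
    set p0 := δ q1 a with hp0
    have hq1mem : q1 ∈ preim δ {p0} [a] := by
      rw [mem_preim]; simp [act, hp0]
    have hq2mem : q2 ∈ preim δ {p0} [a] := by
      rw [mem_preim]; simp [act, ← hδ]
    have hcard2 : 2 ≤ (preim δ {p0} [a]).card :=
      Finset.one_lt_card.mpr ⟨q1, hq1mem, q2, hq2mem, hq12⟩
    obtain ⟨w, hw, hws⟩ := extend_claim δ n k hn hext (n - 2) (preim δ {p0} [a])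
      ⟨q1, hq1mem⟩ (by omega)
    refine ⟨w ++ [a], p0, fun q => ?_, ?_⟩
    · have := (mem_preim δ {p0} [a] _).mp (hws q)
      rw [act_append]
      simpa using this
    · rw [List.length_append]
      simp only [List.length_singleton]
      omega
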